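/- arXiv:0711.1477 — 2 statements merged into one kernel-verified Lean document; each statement's English description precedes it below -/
import Mathlib

section
/- Let u ∈ ℝ^n with Σ u_i^2 = 1, and let η_1,...,η_n be i.i.d. uniform on [-1,1]. Then P(|Σ_{i=1}^n u_i η_i| ≥ 1/3) ≥ 4/27. -/
open MeasureTheory ProbabilityTheory

section Aux
variable {Ω : Type*} [MeasurableSpace Ω] {μ : Measure Ω} [IsProbabilityMeasure μ]

lemma integrable_of_abs_le' {f : Ω → ℝ} (hf : Measurable f) (C : ℝ)
    (h : ∀ᵐ ω ∂μ, |f ω| ≤ C) : Integrable f μ :=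
  (memLp_top_of_bound hf.aestronglyMeasurable C
    (h.mono fun ω hω => by simpa [Real.norm_eq_abs] using hω)).integrable le_top

omit [IsProbabilityMeasure μ] in
lemma unif_moment' {g : Ω → ℝ} (hg : Measurable g)
    (h : Measure.map g μ = (2 : ENNReal)⁻¹ • (volume.restrict (Set.Icc (-1 : ℝ) 1)))
    (k : ℕ) : ∫ ω, g ω ^ k ∂μ = (1 - (-1 : ℝ) ^ (k + 1)) / (2 * (k + 1)) := by
  have h1 : ∫ ω, g ω ^ k ∂μ = ∫ x, x ^ k ∂(Measure.map g μ) :=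
    (integral_map hg.aemeasurable (measurable_id.pow_const k).aestronglyMeasurable).symm
  rw [h1, h, integral_smul_measure, MeasureTheory.integral_Icc_eq_integral_Ioc,
    ← intervalIntegral.integral_of_le (by norm_num : (-1 : ℝ) ≤ 1),
    integral_pow]
  have h2 : ((2 : ENNReal)⁻¹).toReal = (1 : ℝ) / 2 := by
    simp [ENNReal.toReal_inv]
  rw [h2, one_pow, smul_eq_mul]
  have : ((k : ℝ) + 1) ≠ 0 := by positivity
  push_cast
  field_simp

omit [IsProbabilityMeasure μ] in
lemma unif_abs_le' {g : Ω → ℝ} (hg : Measurable g)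
    (h : Measure.map g μ = (2 : ENNReal)⁻¹ • (volume.restrict (Set.Icc (-1 : ℝ) 1))) :
    ∀ᵐ ω ∂μ, |g ω| ≤ 1 := by
  rw [ae_iff]
  have hset : {ω | ¬ |g ω| ≤ 1} = g ⁻¹' {x : ℝ | 1 < |x|} := by
    ext ω; simp [not_le]
  have hms : MeasurableSet {x : ℝ | 1 < |x|} :=
    measurableSet_lt measurable_const continuous_abs.measurable
  rw [hset, ← Measure.map_apply hg hms, h, Measure.smul_apply,
    Measure.restrict_apply hms]
  have hempty : {x : ℝ | 1 < |x|} ∩ Set.Icc (-1 : ℝ) 1 = ∅ := by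
    ext x
    simp only [Set.mem_inter_iff, Set.mem_setOf_eq, Set.mem_Icc, Set.mem_empty_iff_false,
      iff_false, not_and, and_imp]
    intro hx h1 h2
    rcases abs_cases x with hc | hc <;> linarith [hc.1 ▸ hx]
  rw [hempty]
  simp

end Aux

/-- If `u` is a unit vector and `η_i` are i.i.d. uniform on `[-1,1]`, then
`P(|∑ u_i η_i| ≥ 1/3) ≥ 4/27`. -/
theorem stmt_7 {Ω : Type*} [MeasurableSpace Ω] (μ : Measure Ω) [IsProbabilityMeasure μ]
    (n : ℕ) (u : Fin n → ℝ) (hu : ∑ i, u i ^ 2 = 1)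
    (η : Fin n → Ω → ℝ) (hmeas : ∀ i, Measurable (η i))
    (hindep : iIndepFun η μ)
    (hunif : ∀ i, Measure.map (η i) μ =
      (2 : ENNReal)⁻¹ • (volume.restrict (Set.Icc (-1 : ℝ) 1))) :
    (4 : ℝ) / 27 ≤ (μ {ω | (1 : ℝ) / 3 ≤ |∑ i, u i * η i ω|}).toReal := by
  classical
  set X : Fin n → Ω → ℝ := fun i ω => u i * η i ω with hXdef
  have hXmeas : ∀ i, Measurable (X i) := fun i => (hmeas i).const_mul _
  have hXindep : iIndepFun X μ := by
    have h := hindep.comp (fun i => fun x : ℝ => u i * x)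
      (fun i => measurable_const_mul (u i))
    exact h
  have hXbd : ∀ i, ∀ᵐ ω ∂μ, |X i ω| ≤ |u i| := by
    intro i
    filter_upwards [unif_abs_le' (hmeas i) (hunif i)] with ω hω
    calc |X i ω| = |u i| * |η i ω| := abs_mul _ _
    _ ≤ |u i| * 1 := mul_le_mul_of_nonneg_left hω (abs_nonneg _)
    _ = |u i| := mul_one _
  have hXmom : ∀ (i : Fin n) (k : ℕ),
      ∫ ω, X i ω ^ k ∂μ = u i ^ k * ((1 - (-1 : ℝ) ^ (k + 1)) / (2 * (k + 1))) := by
    intro i k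
    have : (fun ω => X i ω ^ k) = fun ω => u i ^ k * η i ω ^ k := by
      funext ω; rw [hXdef]; ring
    rw [this, integral_const_mul, unif_moment' (hmeas i) (hunif i) k]
  have hXint : ∀ i, Integrable (X i) μ := fun i =>
    integrable_of_abs_le' (hXmeas i) _ (hXbd i)
  have hSmeas : ∀ s : Finset (Fin n), Measurable (fun ω => ∑ i ∈ s, X i ω) :=
    fun s => Finset.measurable_sum s (fun i _ => hXmeas i)
  have hSbd : ∀ s : Finset (Fin n), ∀ᵐ ω ∂μ, |∑ i ∈ s, X i ω| ≤ ∑ i ∈ s, |u i| := by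
    intro s
    filter_upwards [ae_all_iff.2 hXbd] with ω hω
    exact (Finset.abs_sum_le_sum_abs _ _).trans (Finset.sum_le_sum fun i _ => hω i)
  have hintS : ∀ (s : Finset (Fin n)) (a : ℕ),
      Integrable (fun ω => (∑ i ∈ s, X i ω) ^ a) μ := by
    intro s a
    apply integrable_of_abs_le' ((hSmeas s).pow_const a) ((∑ i ∈ s, |u i|) ^ a)
    filter_upwards [hSbd s] with ω hω
    rw [abs_pow]
    exact pow_le_pow_left₀ (abs_nonneg _) hω a
  have hintX : ∀ (j : Fin n) (b : ℕ), Integrable (fun ω => X j ω ^ b) μ := by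
    intro j b
    apply integrable_of_abs_le' ((hXmeas j).pow_const b) (|u j| ^ b)
    filter_upwards [hXbd j] with ω hω
    rw [abs_pow]
    exact pow_le_pow_left₀ (abs_nonneg _) hω b
  have hint : ∀ (s : Finset (Fin n)) (a b : ℕ) (j : Fin n),
      Integrable (fun ω => (∑ i ∈ s, X i ω) ^ a * X j ω ^ b) μ := by
    intro s a b j
    apply integrable_of_abs_le' (((hSmeas s).pow_const a).mul ((hXmeas j).pow_const b))
      ((∑ i ∈ s, |u i|) ^ a * |u j| ^ b)
    filter_upwards [hSbd s, hXbd j] with ω h1 h2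
    simp only [Pi.mul_apply]
    rw [abs_mul, abs_pow, abs_pow]
    exact mul_le_mul (pow_le_pow_left₀ (abs_nonneg _) h1 a)
      (pow_le_pow_left₀ (abs_nonneg _) h2 b) (by positivity) (by positivity)
  have hcross : ∀ (s : Finset (Fin n)) (j : Fin n), j ∉ s → ∀ a b : ℕ,
      ∫ ω, (∑ i ∈ s, X i ω) ^ a * X j ω ^ b ∂μ
        = (∫ ω, (∑ i ∈ s, X i ω) ^ a ∂μ) * ∫ ω, X j ω ^ b ∂μ := by
    intro s j hj a b
    have hI : IndepFun (∑ i ∈ s, X i) (X j) μ :=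
      hXindep.indepFun_finsetSum_of_notMem hXmeas hj
    have hI2 : IndepFun (fun ω => (∑ i ∈ s, X i) ω ^ a) (fun ω => X j ω ^ b) μ :=
      hI.comp (measurable_id.pow_const a) (measurable_id.pow_const b)
    have heq : (∑ i ∈ s, X i) = fun ω => ∑ i ∈ s, X i ω := by
      funext ω; simp
    rw [heq] at hI2
    have := hI2.integral_mul_eq_mul_integral (hintS s a).aestronglyMeasurable (hintX j b).aestronglyMeasurable
    simpa [Pi.mul_apply] using this
  -- moments of a single X j
  have m1 : ∀ j, ∫ ω, X j ω ∂μ = 0 := by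
    intro j
    have h := hXmom j 1
    simp only [pow_one] at h
    rw [h]; norm_num
  have m2 : ∀ j, ∫ ω, X j ω ^ 2 ∂μ = u j ^ 2 / 3 := by
    intro j
    rw [hXmom j 2]; norm_num; ring
  have m3 : ∀ j, ∫ ω, X j ω ^ 3 ∂μ = 0 := by
    intro j
    rw [hXmom j 3]; norm_num
  have m4 : ∀ j, ∫ ω, X j ω ^ 4 ∂μ = u j ^ 4 / 5 := by
    intro j
    rw [hXmom j 4]; norm_num; ring
  -- the key induction on finsets
  have key : ∀ s : Finset (Fin n),
      (∫ ω, ∑ i ∈ s, X i ω ∂μ) = 0 ∧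
      (∫ ω, (∑ i ∈ s, X i ω) ^ 2 ∂μ) = (∑ i ∈ s, u i ^ 2) / 3 ∧
      (∫ ω, (∑ i ∈ s, X i ω) ^ 4 ∂μ) ≤ (∑ i ∈ s, u i ^ 2) ^ 2 / 3 := by
    intro s
    induction s using Finset.induction_on with
    | empty => refine ⟨by simp, by simp, by simp⟩
    | insert j s hj ih =>
      obtain ⟨ih1, ih2, ih4⟩ := ih
      have hTint : Integrable (fun ω => ∑ i ∈ s, X i ω) μ :=
        integrable_of_abs_le' (hSmeas s) _ (hSbd s)
      simp only [Finset.sum_insert hj]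
      refine ⟨?_, ?_, ?_⟩
      · rw [integral_add (hXint j) hTint, ih1, m1 j]
        ring
      · have e2 : ∀ ω, (X j ω + ∑ i ∈ s, X i ω) ^ 2
            = (∑ i ∈ s, X i ω) * X j ω * 2 + ((∑ i ∈ s, X i ω) ^ 2 + X j ω ^ 2) :=
          fun ω => by ring
        have hint11 := hint s 1 1 j
        simp only [pow_one] at hint11
        have hc11 := hcross s j hj 1 1
        simp only [pow_one] at hc11
        have hq2 : Integrable (fun ω => (∑ i ∈ s, X i ω) ^ 2 + X j ω ^ 2) μ :=
          (hintS s 2).add (hintX j 2)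
        simp only [e2]
        rw [integral_add (hint11.mul_const 2) hq2,
          integral_add (hintS s 2) (hintX j 2), integral_mul_const, hc11, ih1, ih2, m2 j]
        ring
      · have e4 : ∀ ω, (X j ω + ∑ i ∈ s, X i ω) ^ 4
            = (∑ i ∈ s, X i ω) ^ 3 * X j ω * 4 + (∑ i ∈ s, X i ω) ^ 2 * X j ω ^ 2 * 6
              + (∑ i ∈ s, X i ω) * X j ω ^ 3 * 4
              + ((∑ i ∈ s, X i ω) ^ 4 + X j ω ^ 4) :=
          fun ω => by ring
        have hint31 := hint s 3 1 j
        simp only [pow_one] at hint31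
        have hint13 := hint s 1 3 j
        simp only [pow_one] at hint13
        have hc31 := hcross s j hj 3 1
        simp only [pow_one] at hc31
        have hc22 := hcross s j hj 2 2
        have hc13 := hcross s j hj 1 3
        simp only [pow_one] at hc13
        have hq4 : Integrable (fun ω => (∑ i ∈ s, X i ω) ^ 4 + X j ω ^ 4) μ :=
          (hintS s 4).add (hintX j 4)
        have hq34 : Integrable (fun ω => (∑ i ∈ s, X i ω) ^ 3 * X j ω * 4
            + (∑ i ∈ s, X i ω) ^ 2 * X j ω ^ 2 * 6) μ :=
          (hint31.mul_const 4).add ((hint s 2 2 j).mul_const 6)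
        have hq334 : Integrable (fun ω => (∑ i ∈ s, X i ω) ^ 3 * X j ω * 4
            + (∑ i ∈ s, X i ω) ^ 2 * X j ω ^ 2 * 6
            + (∑ i ∈ s, X i ω) * X j ω ^ 3 * 4) μ :=
          hq34.add (hint13.mul_const 4)
        simp only [e4]
        rw [integral_add hq334 hq4,
          integral_add hq34 (hint13.mul_const 4),
          integral_add (hint31.mul_const 4) ((hint s 2 2 j).mul_const 6),
          integral_add (hintS s 4) (hintX j 4),
          integral_mul_const, integral_mul_const, integral_mul_const,
          hc31, hc22, hc13, m1 j, m2 j, m3 j, m4 j, ih2]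
        nlinarith [ih4, sq_nonneg (u j ^ 2), sq_nonneg (u j), Finset.sum_nonneg
          (fun i (_ : i ∈ s) => sq_nonneg (u i))]
  obtain ⟨h1, h2, h4⟩ := key Finset.univ
  rw [hu] at h2 h4
  norm_num at h2 h4
  set A : Set Ω := {ω | (1 : ℝ) / 3 ≤ |∑ i, X i ω|} with hAdef
  have hA : MeasurableSet A :=
    measurableSet_le measurable_const (hSmeas Finset.univ).abs
  have hpt : ∀ ω, (∑ i, X i ω) ^ 2
      ≤ 1 / 9 + 3 / 4 * A.indicator (fun _ => (1 : ℝ)) ω + 1 / 3 * (∑ i, X i ω) ^ 4 := by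
    intro ω
    by_cases hω : ω ∈ A
    · rw [Set.indicator_of_mem hω]
      nlinarith [sq_nonneg ((∑ i, X i ω) ^ 2 - 3 / 2)]
    · rw [Set.indicator_of_notMem hω]
      have hlt : |∑ i, X i ω| < 1 / 3 := by
        simpa [hAdef, not_le] using hω
      have h0 : (∑ i, X i ω) ^ 2 < 1 / 9 := by
        nlinarith [abs_nonneg (∑ i, X i ω), sq_abs (∑ i, X i ω)]
      have h4' : (0 : ℝ) ≤ (∑ i, X i ω) ^ 4 := by positivity
      linarith
  have hRint : Integrable
      (fun ω => 1 / 9 + 3 / 4 * A.indicator (fun _ => (1 : ℝ)) ω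
        + 1 / 3 * (∑ i, X i ω) ^ 4) μ :=
    ((integrable_const _).add (((integrable_const (1 : ℝ)).indicator hA).const_mul _)).add
      ((hintS Finset.univ 4).const_mul _)
  have hq1 : Integrable (fun ω => 1 / 9 + 3 / 4 * A.indicator (fun _ => (1 : ℝ)) ω) μ :=
    (integrable_const _).add (((integrable_const (1 : ℝ)).indicator hA).const_mul _)
  have hmono := integral_mono (hintS Finset.univ 2) hRint hpt
  rw [h2, integral_add hq1 ((hintS Finset.univ 4).const_mul _),
    integral_add (integrable_const _) (((integrable_const (1 : ℝ)).indicator hA).const_mul _),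
    integral_const, integral_const_mul, integral_const_mul,
    integral_indicator_const _ hA] at hmono
  simp only [measureReal_def, measure_univ, ENNReal.toReal_one, smul_eq_mul, one_smul, one_mul,
    mul_one] at hmono
  linarith [hmono, h4]
end

section
/- Let Y be a symmetric random vector in a Banach space F, η a random variable independent of Y with P(η=1)=P(η=0)=1/2, and suppose P(|x*(Y)| ≥ t) ≤ P(|x*(X)| ≥ t) for all x* ∈ F*, t > 0, where X is a symmetric random vector. If X_1, X_2 are independent copies of X and Y_1, Y_2 are independent copies of Y, and η is independent of (Y_1, Y_2), then for every pair (x_1*, x_2*) ∈ F* × F* and t > 0: P(|x_1*(ηY_1) + x_2*(ηY_2)| ≥ t) ≤ P(|x_1*(X_1) + x_2*(X_2)| ≥ t). -/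
open MeasureTheory ProbabilityTheory

private lemma stmt19_abs_cases {s r t : ℝ} (h : t ≤ |s| + |r|) :
    t ≤ |s + r| ∨ t ≤ |s - r| := by
  rcases le_total 0 s with hs | hs <;> rcases le_total 0 r with hr | hr
  · left
    rw [abs_of_nonneg hs, abs_of_nonneg hr] at h
    rw [abs_of_nonneg (by linarith)]; linarith
  · right
    rw [abs_of_nonneg hs, abs_of_nonpos hr] at h
    rw [abs_of_nonneg (by linarith)]; linarith
  · right
    rw [abs_of_nonpos hs, abs_of_nonneg hr] at h
    rw [abs_of_nonpos (by linarith)]; linarith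
  · left
    rw [abs_of_nonpos hs, abs_of_nonpos hr] at h
    rw [abs_of_nonpos (by linarith)]; linarith

private lemma stmt19_prod_dom (ν₁ ν₂ ν₁' ν₂' : Measure ℝ)
    [IsFiniteMeasure ν₁] [IsFiniteMeasure ν₂] [IsFiniteMeasure ν₁'] [IsFiniteMeasure ν₂']
    (h₁ : ∀ s : ℝ, ν₁ (Set.Ici s) ≤ ν₁' (Set.Ici s))
    (h₂ : ∀ s : ℝ, ν₂ (Set.Ici s) ≤ ν₂' (Set.Ici s)) (t : ℝ) :
    (ν₁.prod ν₂) {p | t ≤ p.1 + p.2} ≤ (ν₁'.prod ν₂') {p | t ≤ p.1 + p.2} := by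
  have hmeas : MeasurableSet {p : ℝ × ℝ | t ≤ p.1 + p.2} :=
    measurableSet_le measurable_const (measurable_fst.add measurable_snd)
  have slice1 : ∀ a : ℝ, (Prod.mk a ⁻¹' {p : ℝ × ℝ | t ≤ p.1 + p.2}) = Set.Ici (t - a) := by
    intro a; ext b
    simp only [Set.mem_preimage, Set.mem_setOf_eq, Set.mem_Ici]
    constructor <;> intro <;> linarith
  have slice2 : ∀ b : ℝ, ((fun x => (x, b)) ⁻¹' {p : ℝ × ℝ | t ≤ p.1 + p.2}) = Set.Ici (t - b) := by
    intro b; ext a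
    simp only [Set.mem_preimage, Set.mem_setOf_eq, Set.mem_Ici]
    constructor <;> intro <;> linarith
  have step1 : (ν₁.prod ν₂) {p | t ≤ p.1 + p.2} ≤ (ν₁.prod ν₂') {p | t ≤ p.1 + p.2} := by
    rw [Measure.prod_apply hmeas, Measure.prod_apply hmeas]
    refine lintegral_mono fun a => ?_
    rw [slice1 a]
    exact h₂ _
  have step2 : (ν₁.prod ν₂') {p | t ≤ p.1 + p.2} ≤ (ν₁'.prod ν₂') {p | t ≤ p.1 + p.2} := by
    rw [Measure.prod_apply_symm hmeas, Measure.prod_apply_symm hmeas]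
    refine lintegral_mono fun b => ?_
    rw [slice2 b]
    exact h₁ _
  exact step1.trans step2

/-- n = 2 case of Kwapień–Woyczyński: for symmetric `X`, `Y` with
`Y ≺ X` weakly, independent copies `X₁, X₂` of `X` and `Y₁, Y₂` of `Y`, and a
Bernoulli(1/2) variable `η` independent of `(Y₁, Y₂)`, for all functionals `x₁*, x₂*`
and `t > 0`: `P(|x₁*(ηY₁) + x₂*(ηY₂)| ≥ t) ≤ P(|x₁*(X₁) + x₂*(X₂)| ≥ t)`. -/
theorem stmt_19 {Ω F : Type*} [MeasurableSpace Ω] (μ : Measure Ω) [IsProbabilityMeasure μ]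
    [NormedAddCommGroup F] [NormedSpace ℝ F] [MeasurableSpace F] [BorelSpace F]
    (X Y : Ω → F) (hX : Measurable X) (hY : Measurable Y)
    (hXsymm : Measure.map X μ = Measure.map (fun ω => -X ω) μ)
    (hYsymm : Measure.map Y μ = Measure.map (fun ω => -Y ω) μ)
    (X₁ X₂ Y₁ Y₂ : Ω → F)
    (hX₁ : Measurable X₁) (hX₂ : Measurable X₂) (hY₁ : Measurable Y₁) (hY₂ : Measurable Y₂)
    (hXind : IndepFun X₁ X₂ μ) (hYind : IndepFun Y₁ Y₂ μ)
    (hX₁d : IdentDistrib X₁ X μ μ) (hX₂d : IdentDistrib X₂ X μ μ)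
    (hY₁d : IdentDistrib Y₁ Y μ μ) (hY₂d : IdentDistrib Y₂ Y μ μ)
    (η : Ω → ℝ) (hη : Measurable η)
    (hη1 : μ {ω | η ω = 1} = 1 / 2) (hη0 : μ {ω | η ω = 0} = 1 / 2)
    (hηind : IndepFun η (fun ω => (Y₁ ω, Y₂ ω)) μ)
    (hdom : ∀ (x : F →L[ℝ] ℝ) (t : ℝ), 0 < t →
      μ {ω | t ≤ |x (Y ω)|} ≤ μ {ω | t ≤ |x (X ω)|}) :
    ∀ (x₁ x₂ : F →L[ℝ] ℝ) (t : ℝ), 0 < t →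
      μ {ω | t ≤ |x₁ (η ω • Y₁ ω) + x₂ (η ω • Y₂ ω)|} ≤
        μ {ω | t ≤ |x₁ (X₁ ω) + x₂ (X₂ ω)|} := by
  intro x₁ x₂ t ht
  -- abbreviations for the scalar maps
  set f : F → ℝ := fun v => |x₁ v| with hf_def
  set g : F → ℝ := fun v => |x₂ v| with hg_def
  have hfm : Measurable f := x₁.measurable.abs
  have hgm : Measurable g := x₂.measurable.abs
  -- the key events
  set T : Set Ω := {ω | t ≤ |x₁ (Y₁ ω) + x₂ (Y₂ ω)|} with hT_def
  have hTmeas : MeasurableSet T :=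
    measurableSet_le measurable_const
      ((x₁.measurable.comp hY₁).add (x₂.measurable.comp hY₂)).abs
  -- Step 0 : kill η
  have hη1meas : MeasurableSet {ω | η ω = 1} := hη (measurableSet_singleton 1)
  have hη0meas : MeasurableSet {ω | η ω = 0} := hη (measurableSet_singleton 0)
  have hdisj : Disjoint {ω | η ω = 1} {ω | η ω = 0} := by
    rw [Set.disjoint_left]
    intro ω h1 h0
    simp only [Set.mem_setOf_eq] at h1 h0
    rw [h1] at h0; norm_num at h0
  have hNnull : μ ({ω | η ω = 1} ∪ {ω | η ω = 0})ᶜ = 0 := by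
    have : μ ({ω | η ω = 1} ∪ {ω | η ω = 0}) = 1 := by
      rw [measure_union hdisj hη0meas, hη1, hη0, ENNReal.div_add_div_same]
      have h11 : (1 : ENNReal) + 1 = 2 := one_add_one_eq_two
      rw [h11]
      exact ENNReal.div_self (by norm_num) (by norm_num)
    rw [measure_compl (hη1meas.union hη0meas) (measure_ne_top μ _), this]
    simp
  have step0 : μ {ω | t ≤ |x₁ (η ω • Y₁ ω) + x₂ (η ω • Y₂ ω)|} ≤
      μ ({ω | η ω = 1} ∩ T) := by
    have hsub : {ω | t ≤ |x₁ (η ω • Y₁ ω) + x₂ (η ω • Y₂ ω)|} ⊆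
        ({ω | η ω = 1} ∩ T) ∪ ({ω | η ω = 1} ∪ {ω | η ω = 0})ᶜ := by
      intro ω hω
      by_cases h1 : η ω = 1
      · left
        refine ⟨h1, ?_⟩
        simp only [Set.mem_setOf_eq, h1, one_smul] at hω ⊢
        exact hω
      · by_cases h0 : η ω = 0
        · exfalso
          simp only [Set.mem_setOf_eq, h0, zero_smul, map_zero, add_zero, abs_zero] at hω
          linarith
        · right
          simp only [Set.mem_compl_iff, Set.mem_union, Set.mem_setOf_eq]
          tauto
    calc μ {ω | t ≤ |x₁ (η ω • Y₁ ω) + x₂ (η ω • Y₂ ω)|}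
        ≤ μ (({ω | η ω = 1} ∩ T) ∪ ({ω | η ω = 1} ∪ {ω | η ω = 0})ᶜ) := measure_mono hsub
      _ ≤ μ ({ω | η ω = 1} ∩ T) + μ (({ω | η ω = 1} ∪ {ω | η ω = 0})ᶜ) := measure_union_le _ _
      _ = μ ({ω | η ω = 1} ∩ T) := by rw [hNnull, add_zero]
  -- independence of η and (Y₁, Y₂)
  have hstep0' : μ ({ω | η ω = 1} ∩ T) = (1 / 2 : ENNReal) * μ T := by
    have hSet : MeasurableSet {p : F × F | t ≤ |x₁ p.1 + x₂ p.2|} :=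
      measurableSet_le measurable_const
        ((x₁.measurable.comp measurable_fst).add (x₂.measurable.comp measurable_snd)).abs
    have h := hηind.measure_inter_preimage_eq_mul {(1 : ℝ)}
      {p : F × F | t ≤ |x₁ p.1 + x₂ p.2|} (measurableSet_singleton 1) hSet
    have h1 : η ⁻¹' {(1 : ℝ)} = {ω | η ω = 1} := rfl
    have h2 : (fun ω => (Y₁ ω, Y₂ ω)) ⁻¹' {p : F × F | t ≤ |x₁ p.1 + x₂ p.2|} = T := rfl
    rw [h1, h2] at h
    rw [h, hη1]
  -- Step 1 : triangle inequality
  have step1 : μ T ≤ μ {ω | t ≤ f (Y₁ ω) + g (Y₂ ω)} := by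
    refine measure_mono fun ω hω => ?_
    simp only [Set.mem_setOf_eq, hf_def, hg_def] at hω ⊢
    exact le_trans hω (abs_add_le _ _)
  -- express sums of independent coordinates as product measures
  have expand : ∀ (Z₁ Z₂ : Ω → F), Measurable Z₁ → Measurable Z₂ → IndepFun Z₁ Z₂ μ →
      μ {ω | t ≤ f (Z₁ ω) + g (Z₂ ω)} =
        ((μ.map (f ∘ Z₁)).prod (μ.map (g ∘ Z₂))) {p | t ≤ p.1 + p.2} := by
    intro Z₁ Z₂ hZ₁ hZ₂ hind
    have hu : Measurable (f ∘ Z₁) := hfm.comp hZ₁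
    have hv : Measurable (g ∘ Z₂) := hgm.comp hZ₂
    have hindc : IndepFun (f ∘ Z₁) (g ∘ Z₂) μ := hind.comp hfm hgm
    have hmap := (indepFun_iff_map_prod_eq_prod_map_map hu.aemeasurable hv.aemeasurable).mp hindc
    have hmeas : MeasurableSet {p : ℝ × ℝ | t ≤ p.1 + p.2} :=
      measurableSet_le measurable_const (measurable_fst.add measurable_snd)
    rw [← hmap, Measure.map_apply (hu.prodMk hv) hmeas]
    rfl
  -- tail domination for the marginals, all thresholds
  have tail : ∀ (x : F →L[ℝ] ℝ) (s : ℝ),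
      (μ.map (fun ω => |x (Y ω)|)) (Set.Ici s) ≤ (μ.map (fun ω => |x (X ω)|)) (Set.Ici s) := by
    intro x s
    have hmy : Measurable (fun ω => |x (Y ω)|) := (x.measurable.comp hY).abs
    have hmx : Measurable (fun ω => |x (X ω)|) := (x.measurable.comp hX).abs
    rw [Measure.map_apply hmy measurableSet_Ici, Measure.map_apply hmx measurableSet_Ici]
    rcases lt_or_ge 0 s with hs | hs
    · exact hdom x s hs
    · have e1 : (fun ω => |x (Y ω)|) ⁻¹' Set.Ici s = Set.univ :=
        Set.eq_univ_of_forall fun ω => le_trans hs (abs_nonneg _)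
      have e2 : (fun ω => |x (X ω)|) ⁻¹' Set.Ici s = Set.univ :=
        Set.eq_univ_of_forall fun ω => le_trans hs (abs_nonneg _)
      rw [e1, e2]
  -- identical distribution : marginals of the copies agree with those of X, Y
  have mapY₁ : μ.map (f ∘ Y₁) = μ.map (fun ω => |x₁ (Y ω)|) := (hY₁d.comp hfm).map_eq
  have mapY₂ : μ.map (g ∘ Y₂) = μ.map (fun ω => |x₂ (Y ω)|) := (hY₂d.comp hgm).map_eq
  have mapX₁ : μ.map (f ∘ X₁) = μ.map (fun ω => |x₁ (X ω)|) := (hX₁d.comp hfm).map_eq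
  have mapX₂ : μ.map (g ∘ X₂) = μ.map (fun ω => |x₂ (X ω)|) := (hX₂d.comp hgm).map_eq
  -- Step 2 : replace Y marginals by X marginals
  have step2 : μ {ω | t ≤ f (Y₁ ω) + g (Y₂ ω)} ≤ μ {ω | t ≤ f (X₁ ω) + g (X₂ ω)} := by
    rw [expand Y₁ Y₂ hY₁ hY₂ hYind, expand X₁ X₂ hX₁ hX₂ hXind]
    haveI : IsProbabilityMeasure (μ.map (f ∘ Y₁)) :=
      Measure.isProbabilityMeasure_map (hfm.comp hY₁).aemeasurable
    haveI : IsProbabilityMeasure (μ.map (g ∘ Y₂)) :=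
      Measure.isProbabilityMeasure_map (hgm.comp hY₂).aemeasurable
    haveI : IsProbabilityMeasure (μ.map (f ∘ X₁)) :=
      Measure.isProbabilityMeasure_map (hfm.comp hX₁).aemeasurable
    haveI : IsProbabilityMeasure (μ.map (g ∘ X₂)) :=
      Measure.isProbabilityMeasure_map (hgm.comp hX₂).aemeasurable
    refine stmt19_prod_dom _ _ _ _ (fun s => ?_) (fun s => ?_) t
    · rw [mapY₁, mapX₁]; exact tail x₁ s
    · rw [mapY₂, mapX₂]; exact tail x₂ s
  -- Step 3 : symmetry of X₂ : compare with the true sum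
  have step3 : μ {ω | t ≤ f (X₁ ω) + g (X₂ ω)} ≤
      2 * μ {ω | t ≤ |x₁ (X₁ ω) + x₂ (X₂ ω)|} := by
    -- law of X₂ is invariant under negation
    have hnegX₂ : μ.map X₂ = μ.map (fun ω => -X₂ ω) := by
      have h1 : μ.map X₂ = μ.map X := hX₂d.map_eq
      have h2 : μ.map (fun ω => -X ω) = Measure.map Neg.neg (μ.map X) := by
        rw [Measure.map_map measurable_neg hX]; rfl
      have h3 : μ.map (fun ω => -X₂ ω) = Measure.map Neg.neg (μ.map X₂) := by
        rw [Measure.map_map measurable_neg hX₂]; rfl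
      rw [h1, h3, h1, ← h2, ← hXsymm]
    -- joint law of (X₁, -X₂) = joint law of (X₁, X₂)
    have hjoint : μ.map (fun ω => (X₁ ω, X₂ ω)) = μ.map (fun ω => (X₁ ω, -X₂ ω)) := by
      have i1 := (indepFun_iff_map_prod_eq_prod_map_map hX₁.aemeasurable
        hX₂.aemeasurable).mp hXind
      have i2 := (indepFun_iff_map_prod_eq_prod_map_map hX₁.aemeasurable
        hX₂.neg.aemeasurable).mp hXind.neg_right
      rw [show (-X₂) = fun ω => -X₂ ω from rfl] at i2
      rw [i1, i2, ← hnegX₂]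
    have hEplus : MeasurableSet {p : F × F | t ≤ |x₁ p.1 + x₂ p.2|} :=
      measurableSet_le measurable_const
        ((x₁.measurable.comp measurable_fst).add (x₂.measurable.comp measurable_snd)).abs
    have hEminus : MeasurableSet {p : F × F | t ≤ |x₁ p.1 - x₂ p.2|} :=
      measurableSet_le measurable_const
        ((x₁.measurable.comp measurable_fst).sub (x₂.measurable.comp measurable_snd)).abs
    have hpair : Measurable (fun ω => (X₁ ω, X₂ ω)) := hX₁.prodMk hX₂
    have hpair' : Measurable (fun ω => (X₁ ω, -X₂ ω)) := hX₁.prodMk hX₂.neg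
    -- P(|x₁X₁ - x₂X₂| ≥ t) = P(|x₁X₁ + x₂X₂| ≥ t)
    have hflip : μ {ω | t ≤ |x₁ (X₁ ω) - x₂ (X₂ ω)|} = μ {ω | t ≤ |x₁ (X₁ ω) + x₂ (X₂ ω)|} := by
      have e1 : μ {ω | t ≤ |x₁ (X₁ ω) - x₂ (X₂ ω)|} =
          (μ.map (fun ω => (X₁ ω, X₂ ω))) {p : F × F | t ≤ |x₁ p.1 - x₂ p.2|} := by
        rw [Measure.map_apply hpair hEminus]; rfl
      have e2 : (μ.map (fun ω => (X₁ ω, -X₂ ω))) {p : F × F | t ≤ |x₁ p.1 - x₂ p.2|} =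
          μ {ω | t ≤ |x₁ (X₁ ω) + x₂ (X₂ ω)|} := by
        rw [Measure.map_apply hpair' hEminus]
        congr 1
        ext ω
        simp only [Set.mem_preimage, Set.mem_setOf_eq, map_neg, sub_neg_eq_add]
      rw [e1, hjoint, e2]
    -- the union bound
    have hsub : {ω | t ≤ f (X₁ ω) + g (X₂ ω)} ⊆
        {ω | t ≤ |x₁ (X₁ ω) + x₂ (X₂ ω)|} ∪ {ω | t ≤ |x₁ (X₁ ω) - x₂ (X₂ ω)|} := by
      intro ω hω
      simp only [Set.mem_setOf_eq, hf_def, hg_def] at hω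
      rcases stmt19_abs_cases hω with h | h
      · left; exact h
      · right; exact h
    calc μ {ω | t ≤ f (X₁ ω) + g (X₂ ω)}
        ≤ μ ({ω | t ≤ |x₁ (X₁ ω) + x₂ (X₂ ω)|} ∪ {ω | t ≤ |x₁ (X₁ ω) - x₂ (X₂ ω)|}) :=
          measure_mono hsub
      _ ≤ μ {ω | t ≤ |x₁ (X₁ ω) + x₂ (X₂ ω)|} + μ {ω | t ≤ |x₁ (X₁ ω) - x₂ (X₂ ω)|} :=
          measure_union_le _ _
      _ = 2 * μ {ω | t ≤ |x₁ (X₁ ω) + x₂ (X₂ ω)|} := by rw [hflip]; ring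
  -- put everything together
  calc μ {ω | t ≤ |x₁ (η ω • Y₁ ω) + x₂ (η ω • Y₂ ω)|}
      ≤ μ ({ω | η ω = 1} ∩ T) := step0
    _ = (1 / 2 : ENNReal) * μ T := hstep0'
    _ ≤ (1 / 2 : ENNReal) * (2 * μ {ω | t ≤ |x₁ (X₁ ω) + x₂ (X₂ ω)|}) := by
        exact mul_le_mul_right ((step1.trans step2).trans step3) _
    _ = μ {ω | t ≤ |x₁ (X₁ ω) + x₂ (X₂ ω)|} := by
        rw [← mul_assoc]
        norm_num
        rw [ENNReal.inv_mul_cancel (by norm_num) (by norm_num), one_mul]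
end
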